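/- Let d ≥ 1 and T > 0. Let H₀, H₁ be Hermitian d×d complex matrices, let f : ℝ → ℝ be continuous, and let D be a linear superoperator on d×d complex matrices. Define L_t(A) = −i((H₀ + f(t)·H₁)·A − A·(H₀ + f(t)·H₁)) + D(A) and L(A) = −i(H₀·A − A·H₀) + D(A). Let ρ : ℝ → Matrix (Fin d) (Fin d) ℂ be differentiable with ρ'(t) = L_t(ρ(t)) and ‖ρ(t)‖₁ = 1 for all t ∈ [0,T], and suppose ρ₀ = ρ(0) commutes with H₁. If K > 0 is a constant satisfying ‖L(A)‖₂ ≤ K·‖A‖₂ for all matrices A, where ‖A‖₂ = √(Tr(AᴴA)) is the Frobenius (Hilbert–Schmidt) norm, then T ≥ ‖ρ(T) − ρ₀‖₁ / (√d · K). -/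

import Mathlib

open Matrix
open scoped ComplexOrder

/- Matrices are equipped with the Frobenius norm so that curves of matrices can be
differentiated; the statement itself is phrased via the trace and Frobenius norms
defined below. -/
attribute [local instance] Matrix.frobeniusNormedAddCommGroup Matrix.frobeniusNormedSpace

/-- Trace norm (Schatten 1-norm): `‖A‖₁ = Tr √(Aᴴ A)`. -/
noncomputable def posSemidefSqrtOld {d : ℕ} {B : Matrix (Fin d) (Fin d) ℂ} (hB : B.PosSemidef) :
    Matrix (Fin d) (Fin d) ℂ :=
  hB.1.eigenvectorUnitary.1 * diagonal (fun i => ((Real.sqrt (hB.1.eigenvalues i) : ℝ) : ℂ)) *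
    (star hB.1.eigenvectorUnitary : Matrix (Fin d) (Fin d) ℂ)

noncomputable def traceNorm {d : ℕ} (A : Matrix (Fin d) (Fin d) ℂ) : ℝ :=
  ((posSemidefSqrtOld (Matrix.posSemidef_conjTranspose_mul_self A)).trace).re

/-- Frobenius (Hilbert–Schmidt) norm: `‖A‖₂ = √(Tr (Aᴴ A))`. -/
noncomputable def frobNorm {d : ℕ} (A : Matrix (Fin d) (Fin d) ℂ) : ℝ :=
  Real.sqrt ((Aᴴ * A).trace.re)

section aux
variable {d : ℕ}

-- trace of conjugation by unitary-like matrix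
lemma trace_conj_eq {U B : Matrix (Fin d) (Fin d) ℂ} (hU : star U * U = 1) :
    (U * B * star U).trace = B.trace := by
  rw [trace_mul_cycle, hU, one_mul]

lemma trace_eq_sum_eigenvalues {A : Matrix (Fin d) (Fin d) ℂ} (hA : A.IsHermitian) :
    A.trace = ∑ i, (hA.eigenvalues i : ℂ) := by
  conv_lhs => rw [hA.spectral_theorem]
  rw [Unitary.conjStarAlgAut_apply, trace_conj_eq (Unitary.coe_star_mul_self hA.eigenvectorUnitary), trace_diagonal]
  simp

lemma traceNorm_eq_sum (A : Matrix (Fin d) (Fin d) ℂ) :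
    traceNorm A = ∑ i, Real.sqrt ((Matrix.posSemidef_conjTranspose_mul_self A).1.eigenvalues i) := by
  unfold traceNorm
  rw [posSemidefSqrtOld,
    trace_conj_eq (Unitary.coe_star_mul_self
      (Matrix.posSemidef_conjTranspose_mul_self A).1.eigenvectorUnitary), trace_diagonal]
  simp

lemma frobNorm_eq_sum (A : Matrix (Fin d) (Fin d) ℂ) :
    frobNorm A = Real.sqrt (∑ i, (Matrix.posSemidef_conjTranspose_mul_self A).1.eigenvalues i) := by
  unfold frobNorm
  rw [trace_eq_sum_eigenvalues (Matrix.posSemidef_conjTranspose_mul_self A).1]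
  congr 1
  simp

end aux

lemma traceNorm_le_sqrt_mul_frobNorm (A : Matrix (Fin d) (Fin d) ℂ) :
    traceNorm A ≤ Real.sqrt d * frobNorm A := by
  rw [traceNorm_eq_sum, frobNorm_eq_sum]
  set lam := (Matrix.posSemidef_conjTranspose_mul_self A).1.eigenvalues with hlam
  have hnn : ∀ i, 0 ≤ lam i := fun i =>
    (Matrix.posSemidef_conjTranspose_mul_self A).eigenvalues_nonneg i
  have h1 : (∑ i, Real.sqrt (lam i)) ^ 2 ≤ d * ∑ i, lam i := by
    calc (∑ i, Real.sqrt (lam i)) ^ 2 ≤ (Finset.univ.card : ℝ) * ∑ i : Fin d, Real.sqrt (lam i) ^ 2 :=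
          sq_sum_le_card_mul_sum_sq
      _ = d * ∑ i, lam i := by
          simp [Real.sq_sqrt (hnn _), Finset.card_univ]
  have h2 : (0:ℝ) ≤ ∑ i, Real.sqrt (lam i) := Finset.sum_nonneg fun i _ => Real.sqrt_nonneg _
  calc ∑ i, Real.sqrt (lam i) = Real.sqrt ((∑ i, Real.sqrt (lam i)) ^ 2) := by
        rw [Real.sqrt_sq h2]
    _ ≤ Real.sqrt (d * ∑ i, lam i) := Real.sqrt_le_sqrt h1
    _ = Real.sqrt d * Real.sqrt (∑ i, lam i) := Real.sqrt_mul (by positivity) _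

lemma frobNorm_le_traceNorm (A : Matrix (Fin d) (Fin d) ℂ) :
    frobNorm A ≤ traceNorm A := by
  rw [traceNorm_eq_sum, frobNorm_eq_sum]
  set lam := (Matrix.posSemidef_conjTranspose_mul_self A).1.eigenvalues with hlam
  have hnn : ∀ i, 0 ≤ lam i := fun i =>
    (Matrix.posSemidef_conjTranspose_mul_self A).eigenvalues_nonneg i
  have h2 : (0:ℝ) ≤ ∑ i, Real.sqrt (lam i) := Finset.sum_nonneg fun i _ => Real.sqrt_nonneg _
  have h1 : ∑ i, lam i ≤ (∑ i, Real.sqrt (lam i)) ^ 2 := by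
    have := Finset.sum_sq_le_sq_sum_of_nonneg
      (s := Finset.univ) (f := fun i : Fin d => Real.sqrt (lam i))
      (fun i _ => Real.sqrt_nonneg _)
    simpa [Real.sq_sqrt (hnn _)] using this
  calc Real.sqrt (∑ i, lam i) ≤ Real.sqrt ((∑ i, Real.sqrt (lam i)) ^ 2) := Real.sqrt_le_sqrt h1
    _ = ∑ i, Real.sqrt (lam i) := Real.sqrt_sq h2

lemma frobNorm_eq_norm (A : Matrix (Fin d) (Fin d) ℂ) : frobNorm A = ‖A‖ := by
  rw [frobNorm, Matrix.frobenius_norm_def, ← Real.sqrt_eq_rpow]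
  congr 1
  rw [Matrix.trace]
  simp only [Complex.re_sum, Matrix.diag_apply, Matrix.mul_apply, Matrix.conjTranspose_apply]
  rw [Finset.sum_comm]
  congr 1; ext i; congr 1; ext j
  rw [Complex.mul_re]
  simp [Complex.normSq_apply, Complex.sq_norm]

lemma frobNorm_conj {U : Matrix (Fin d) (Fin d) ℂ} (hU : star U * U = 1)
    (A : Matrix (Fin d) (Fin d) ℂ) : frobNorm (U * A * star U) = frobNorm A := by
  unfold frobNorm
  congr 2
  have : (U * A * star U)ᴴ * (U * A * star U) = U * (Aᴴ * A) * star U := by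
    simp only [Matrix.conjTranspose_mul, Matrix.conjTranspose_conjTranspose, Matrix.star_eq_conjTranspose]
    calc U * (Aᴴ * Uᴴ) * (U * A * Uᴴ) = U * (Aᴴ * (Uᴴ * U) * A) * Uᴴ := by
          noncomm_ring
      _ = U * (Aᴴ * A) * Uᴴ := by rw [show Uᴴ * U = 1 from hU]; simp
  rw [this, trace_conj_eq hU]

attribute [local instance] Matrix.frobeniusNormedRing Matrix.frobeniusNormedAlgebra

open NormedSpace in
lemma exp_test (M : Matrix (Fin d) (Fin d) ℂ) (t : ℝ) :
    HasDerivAt (fun u : ℝ => exp (u • M)) (exp (t • M) * M) t := by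
  exact hasDerivAt_exp_smul_const M t

open NormedSpace in
lemma exp_facts (M : Matrix (Fin d) (Fin d) ℂ) (hM : Mᴴ = -M) (s : ℝ) :
    star (exp (s • M)) = exp (s • (-M)) ∧
    exp (s • (-M)) * exp (s • M) = 1 ∧
    exp (s • M) * exp (s • (-M)) = 1 := by
  refine ⟨?_, ?_, ?_⟩
  · rw [Matrix.star_eq_conjTranspose, ← Matrix.exp_conjTranspose]
    congr 1
    rw [Matrix.conjTranspose_smul, hM, star_trivial]
  · rw [← Matrix.exp_add_of_commute _ _ (by exact ((Commute.refl M).neg_left.smul_left s).smul_right s)]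
    simp [exp_zero]
  · rw [← Matrix.exp_add_of_commute _ _ (by exact ((Commute.refl M).neg_right.smul_left s).smul_right s)]
    simp [exp_zero]


open NormedSpace

/-- schedule-independent annealing speed limit via the induced 2-norm,
Eq. (12) of the paper. For `L_t(A) = −i[(H₀ + f(t)H₁), A] + D(A)` and
`L(A) = −i[H₀, A] + D(A)`: if `ρ` solves `ρ' = L_t ρ` on `[0,T]` with `‖ρ(t)‖₁ = 1`,
`ρ₀ = ρ(0)` commutes with `H₁`, and `K > 0` satisfies `‖L(A)‖₂ ≤ K‖A‖₂` for all `A`,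
then `T ≥ ‖ρ(T) − ρ₀‖₁ / (√d · K)`. -/
theorem annealing_speed_limit_two_norm (d : ℕ) (hd : 1 ≤ d) (T : ℝ) (hT : 0 < T)
    (H₀ H₁ : Matrix (Fin d) (Fin d) ℂ) (hH₀ : H₀.IsHermitian) (hH₁ : H₁.IsHermitian)
    (f : ℝ → ℝ) (hf : Continuous f)
    (D : Matrix (Fin d) (Fin d) ℂ →ₗ[ℂ] Matrix (Fin d) (Fin d) ℂ)
    (ρ : ℝ → Matrix (Fin d) (Fin d) ℂ)
    (hρ : ∀ t ∈ Set.Icc (0 : ℝ) T, HasDerivAt ρ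
      ((-Complex.I) • ((H₀ + (f t : ℂ) • H₁) * ρ t - ρ t * (H₀ + (f t : ℂ) • H₁))
        + D (ρ t)) t)
    (hρnorm : ∀ t ∈ Set.Icc (0 : ℝ) T, traceNorm (ρ t) = 1)
    (hcomm : ρ 0 * H₁ = H₁ * ρ 0)
    (K : ℝ) (hK : 0 < K)
    (hKbound : ∀ A : Matrix (Fin d) (Fin d) ℂ,
      frobNorm ((-Complex.I) • (H₀ * A - A * H₀) + D A) ≤ K * frobNorm A) :
    traceNorm (ρ T - ρ 0) / (Real.sqrt d * K) ≤ T := by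
  classical
  set M : Matrix (Fin d) (Fin d) ℂ := Complex.I • H₁ with hMdef
  have hMH : Mᴴ = -M := by
    rw [hMdef, Matrix.conjTranspose_smul, hH₁.eq, Complex.star_def, Complex.conj_I, neg_smul]
  set g : ℝ → ℝ := fun t => ∫ s in (0:ℝ)..t, f s with hgdef
  have hg0 : g 0 = 0 := by simp [hgdef]
  have hg : ∀ t : ℝ, HasDerivAt g (f t) t := fun t =>
    intervalIntegral.integral_hasDerivAt_right (hf.intervalIntegrable _ _)
      (hf.stronglyMeasurableAtFilter _ _) hf.continuousAt
  set W : ℝ → Matrix (Fin d) (Fin d) ℂ := fun t => exp (g t • M) with hWdef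
  set V : ℝ → Matrix (Fin d) (Fin d) ℂ := fun t => exp (g t • (-M)) with hVdef
  have hstar : ∀ t, star (W t) = V t := fun t => (exp_facts M hMH (g t)).1
  have hVW : ∀ t, V t * W t = 1 := fun t => (exp_facts M hMH (g t)).2.1
  have hWV : ∀ t, W t * V t = 1 := fun t => (exp_facts M hMH (g t)).2.2
  have hWd : ∀ t : ℝ, HasDerivAt W (f t • (W t * M)) t := by
    intro t
    have h1 := hasDerivAt_exp_smul_const (𝕂 := ℝ) M (g t)
    exact HasDerivAt.scomp t h1 (hg t)
  have hVd : ∀ t : ℝ, HasDerivAt V (f t • ((-M) * V t)) t := by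
    intro t
    have h1 := hasDerivAt_exp_smul_const' (𝕂 := ℝ) (-M) (g t)
    exact HasDerivAt.scomp t h1 (hg t)
  set E : ℝ → Matrix (Fin d) (Fin d) ℂ :=
    fun t => (-Complex.I) • (H₀ * ρ t - ρ t * H₀) + D (ρ t) with hEdef
  set σ : ℝ → Matrix (Fin d) (Fin d) ℂ := fun t => W t * ρ t * V t with hσdef
  have hσd : ∀ t ∈ Set.Icc (0:ℝ) T, HasDerivAt σ (W t * E t * V t) t := by
    intro t ht
    have h := ((hWd t).mul (hρ t ht)).mul (hVd t)
    convert h using 1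
    case e'_4 => rfl
    case e'_5 => rfl
    case e'_6 => rfl
    case e'_8 => rfl
    have hsm : ∀ (r : ℝ) (A : Matrix (Fin d) (Fin d) ℂ), r • A = (r : ℂ) • A := fun r A => by
      rw [← smul_one_smul ℂ r A, Complex.real_smul, mul_one]
    rw [hsm, hsm]
    simp only [hEdef, hMdef, mul_add, add_mul, mul_sub, sub_mul, smul_mul_assoc,
      mul_smul_comm, smul_sub, smul_add, smul_smul]
    simp only [neg_mul, mul_neg, smul_neg, neg_smul, neg_neg, smul_mul_assoc,
      mul_smul_comm, smul_smul, mul_assoc, Pi.mul_apply]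
    module
  have hbound : ∀ t ∈ Set.Icc (0:ℝ) T, ‖W t * E t * V t‖ ≤ K := by
    intro t ht
    rw [← frobNorm_eq_norm]
    rw [show W t * E t * V t = W t * E t * star (W t) by rw [hstar]]
    rw [frobNorm_conj (by rw [hstar]; exact hVW t)]
    calc frobNorm (E t) ≤ K * frobNorm (ρ t) := hKbound (ρ t)
      _ ≤ K * traceNorm (ρ t) := by
          exact mul_le_mul_of_nonneg_left (frobNorm_le_traceNorm _) hK.le
      _ = K := by rw [hρnorm t ht, mul_one]
  have hmvt : ‖σ T - σ 0‖ ≤ K * ‖T - 0‖ :=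
    Convex.norm_image_sub_le_of_norm_hasDerivWithin_le
      (fun t ht => (hσd t ht).hasDerivWithinAt) hbound (convex_Icc 0 T)
      ⟨le_refl 0, hT.le⟩ ⟨hT.le, le_refl T⟩
  have hσ0 : σ 0 = ρ 0 := by
    simp [hσdef, hWdef, hVdef, hg0, exp_zero]
  have hWρ0 : W T * ρ 0 * V T = ρ 0 := by
    have hc : Commute (ρ 0) M := by
      rw [hMdef]
      exact (show Commute (ρ 0) H₁ from hcomm).smul_right Complex.I
    have hcW : Commute (ρ 0) (W T) := (hc.smul_right (g T)).exp_right
    rw [← hcW.eq, mul_assoc, hWV, mul_one]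
  have hkey : traceNorm (ρ T - ρ 0) ≤ Real.sqrt d * (K * T) := by
    calc traceNorm (ρ T - ρ 0) ≤ Real.sqrt d * frobNorm (ρ T - ρ 0) :=
          traceNorm_le_sqrt_mul_frobNorm _
      _ = Real.sqrt d * frobNorm (W T * (ρ T - ρ 0) * star (W T)) := by
          rw [frobNorm_conj (by rw [hstar]; exact hVW T)]
      _ = Real.sqrt d * ‖σ T - σ 0‖ := by
          rw [hstar, hσ0, ← frobNorm_eq_norm]
          congr 2
          rw [hσdef]
          simp only [mul_sub, sub_mul]
          rw [hWρ0]
      _ ≤ Real.sqrt d * (K * ‖T - 0‖) := mul_le_mul_of_nonneg_left hmvt (Real.sqrt_nonneg _)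
      _ = Real.sqrt d * (K * T) := by rw [sub_zero, Real.norm_of_nonneg hT.le]
  have hpos : 0 < Real.sqrt d * K := by
    have : (0:ℝ) < d := by exact_mod_cast hd
    positivity
  rw [div_le_iff₀ hpos]
  calc traceNorm (ρ T - ρ 0) ≤ Real.sqrt d * (K * T) := hkey
    _ = T * (Real.sqrt d * K) := by ring
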